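/- (Hoeffding sampling bound for two parts of a partition) Let c ∈ {0,1}^{n+n'} be a fixed bit string, and choose uniformly at random a subset A of {1,…,n+n'} of size n, with B its complement of size n'. Let |C_A| and |C_B| denote the numbers of 1-bits of c in positions A and B respectively. Then for any p > 0 and ε > 0: Pr[ (|C_A|/n ≥ p + ε) ∧ (|C_B|/n' ≤ p) ] ≤ exp(−2 (n'/(n+n'))² n ε²). -/

import Mathlib

open Finset

/-- Count of k-subsets of a fintype containing a fixed set S. -/
lemma count_supersets {α : Type*} [Fintype α] [DecidableEq α] (S : Finset α) (k : ℕ)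
    (hSk : S.card ≤ k) :
    ((Finset.powersetCard k (univ : Finset α)).filter (fun A => S ⊆ A)).card
      = (Fintype.card α - S.card).choose (k - S.card) := by
  rw [← Finset.card_compl S, ← Finset.card_powersetCard (k - S.card) Sᶜ]
  apply Finset.card_bij' (fun A _ => A \ S) (fun B _ => B ∪ S)
  · intro A hA
    simp only [mem_filter, Finset.mem_powersetCard] at hA
    obtain ⟨⟨-, hcard⟩, hSA⟩ := hA
    simp only [Finset.mem_powersetCard]
    constructor
    · intro x hx
      simp only [Finset.mem_sdiff] at hx
      simp [Finset.mem_compl, hx.2]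
    · rw [Finset.card_sdiff_of_subset hSA, hcard]
  · intro B hB
    simp only [Finset.mem_powersetCard] at hB
    obtain ⟨hBS, hcard⟩ := hB
    have hdisj : Disjoint B S := by
      rw [Finset.disjoint_right]
      intro x hxS hxB
      exact (Finset.mem_compl.mp (hBS hxB)) hxS
    simp only [mem_filter, Finset.mem_powersetCard]
    refine ⟨⟨Finset.subset_univ _, ?_⟩, Finset.subset_union_right⟩
    rw [Finset.card_union_of_disjoint hdisj, hcard]
    omega
  · intro A hA
    simp only [mem_filter, Finset.mem_powersetCard] at hA
    exact Finset.sdiff_union_of_subset hA.2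
  · intro B hB
    simp only [Finset.mem_powersetCard] at hB
    have hdisj : Disjoint B S := by
      rw [Finset.disjoint_right]
      intro x hxS hxB
      exact (Finset.mem_compl.mp (hB.1 hxB)) hxS
    rw [Finset.union_sdiff_cancel_right hdisj]

/-- Double counting: sum over n-subsets of `choose (|A ∩ C|) j`. -/
lemma sum_choose_inter {α : Type*} [Fintype α] [DecidableEq α] (C : Finset α) (n j : ℕ)
    (hjn : j ≤ n) :
    ∑ A ∈ Finset.powersetCard n (univ : Finset α), ((A ∩ C).card.choose j)
      = C.card.choose j * (Fintype.card α - j).choose (n - j) := by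
  have step1 : ∀ A : Finset α, (A ∩ C).card.choose j
      = ∑ S ∈ Finset.powersetCard j C, (if S ⊆ A then 1 else 0) := by
    intro A
    rw [← Finset.card_powersetCard j (A ∩ C)]
    have : Finset.powersetCard j (A ∩ C) = (Finset.powersetCard j C).filter (fun S => S ⊆ A) := by
      ext S
      simp only [Finset.mem_powersetCard, mem_filter, Finset.subset_inter_iff]
      tauto
    rw [this, Finset.card_filter]
  simp_rw [step1]
  rw [Finset.sum_comm]
  have step2 : ∀ S ∈ Finset.powersetCard j C,
      ∑ A ∈ Finset.powersetCard n (univ : Finset α), (if S ⊆ A then 1 else 0)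
        = (Fintype.card α - j).choose (n - j) := by
    intro S hS
    rw [Finset.mem_powersetCard] at hS
    rw [← Finset.card_filter, count_supersets S n (hS.2 ▸ hjn), hS.2]
  rw [Finset.sum_congr rfl step2, Finset.sum_const, Finset.card_powersetCard, smul_eq_mul]

/-- `choose m j * N^j ≤ choose N j * m^j` for `m ≤ N`. -/
lemma choose_mul_pow_le {m N : ℕ} (h : m ≤ N) (j : ℕ) :
    m.choose j * N ^ j ≤ N.choose j * m ^ j := by
  induction j with
  | zero => simp
  | succ j ih =>
    have key : m.choose (j+1) * N ^ (j+1) * (j+1) ≤ N.choose (j+1) * m ^ (j+1) * (j+1) := by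
      have h1 : m.choose (j+1) * (j+1) = m.choose j * (m - j) := Nat.choose_succ_right_eq m j
      have h2 : N.choose (j+1) * (j+1) = N.choose j * (N - j) := Nat.choose_succ_right_eq N j
      calc m.choose (j+1) * N ^ (j+1) * (j+1)
          = (m.choose (j+1) * (j+1)) * (N ^ j * N) := by ring
        _ = (m.choose j * N ^ j) * ((m - j) * N) := by rw [h1]; ring
        _ ≤ (N.choose j * m ^ j) * ((N - j) * m) := by
            apply Nat.mul_le_mul ih
            calc (m - j) * N = m * N - j * N := by rw [Nat.sub_mul]
              _ ≤ m * N - j * m := by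
                  apply Nat.sub_le_sub_left
                  exact Nat.mul_le_mul_left j h
              _ = (N - j) * m := by rw [Nat.sub_mul, Nat.mul_comm m N]
        _ = (N.choose (j+1) * (j+1)) * (m ^ j * m) := by rw [h2]; ring
        _ = N.choose (j+1) * m ^ (j+1) * (j+1) := by ring
    exact Nat.le_of_mul_le_mul_right key (Nat.succ_pos j)

/-- MGF bound (Chvátal): sum over n-subsets of `y^(|A ∩ C|)` is at most
`choose N n * (μ(y-1)+1)^n` where `μ = |C|/N`. -/
lemma mgf_bound {α : Type*} [Fintype α] [DecidableEq α] (C : Finset α) (n : ℕ)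
    (hn : n ≤ Fintype.card α) (hN : 0 < Fintype.card α) (y : ℝ) (hy : 1 ≤ y) :
    ∑ A ∈ Finset.powersetCard n (univ : Finset α), y ^ (A ∩ C).card ≤
      ((Fintype.card α).choose n : ℝ) *
        ((C.card : ℝ) / (Fintype.card α) * (y - 1) + 1) ^ n := by
  set N := Fintype.card α with hNdef
  set m := C.card with hmdef
  have hmN : m ≤ N := by rw [hmdef, hNdef, ← Finset.card_univ]; exact Finset.card_le_univ C
  have hy0 : 0 ≤ y - 1 := by linarith
  have hN0 : (0:ℝ) < N := by exact_mod_cast hN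
  -- expand each power via the binomial theorem
  have expand : ∀ A ∈ Finset.powersetCard n (univ : Finset α),
      y ^ (A ∩ C).card = ∑ j ∈ Finset.range (n+1), (y - 1) ^ j * ((A ∩ C).card.choose j : ℝ) := by
    intro A hA
    rw [Finset.mem_powersetCard] at hA
    have hk : (A ∩ C).card ≤ n := by
      rw [← hA.2]; exact Finset.card_le_card Finset.inter_subset_left
    have : y = (y - 1) + 1 := by ring
    rw [this, add_pow]
    rw [Finset.sum_subset (Finset.range_subset_range.mpr (Nat.succ_le_succ hk))]
    · apply Finset.sum_congr rfl; intro j hj; rw [one_pow]; ring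
    · intro j hj hj'
      rw [Finset.mem_range, not_lt] at hj'
      rw [Nat.choose_eq_zero_of_lt (by omega)]
      simp
  rw [Finset.sum_congr rfl expand, Finset.sum_comm]
  have inner : ∀ j ∈ Finset.range (n+1),
      ∑ A ∈ Finset.powersetCard n (univ : Finset α), (y - 1) ^ j * ((A ∩ C).card.choose j : ℝ)
        = (y - 1) ^ j * ((m.choose j : ℝ) * ((N - j).choose (n - j) : ℝ)) := by
    intro j hj
    rw [Finset.mem_range] at hj
    rw [← Finset.mul_sum, ← Nat.cast_sum, sum_choose_inter C n j (by omega), Nat.cast_mul]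
  rw [Finset.sum_congr rfl inner]
  have key : ∀ j ∈ Finset.range (n+1),
      (y - 1) ^ j * ((m.choose j : ℝ) * ((N - j).choose (n - j) : ℝ))
        ≤ (N.choose n : ℝ) * (((m:ℝ)/N * (y-1)) ^ j * (1:ℝ) ^ (n - j) * (n.choose j : ℝ)) := by
    intro j hj
    rw [Finset.mem_range] at hj
    have hjn : j ≤ n := by omega
    have hcm : (N.choose n : ℝ) * (n.choose j : ℝ) = (N.choose j : ℝ) * ((N - j).choose (n - j) : ℝ) := by
      exact_mod_cast congrArg (Nat.cast (R := ℝ)) (Nat.choose_mul (n := N) hjn)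
    have hch : (m.choose j : ℝ) ≤ (N.choose j : ℝ) * ((m:ℝ)/N) ^ j := by
      rw [div_pow, ← mul_div_assoc, le_div_iff₀ (by positivity)]
      exact_mod_cast choose_mul_pow_le hmN j
    calc (y - 1) ^ j * ((m.choose j : ℝ) * ((N - j).choose (n - j) : ℝ))
        ≤ (y - 1) ^ j * ((N.choose j : ℝ) * ((m:ℝ)/N) ^ j * ((N - j).choose (n - j) : ℝ)) := by
          apply mul_le_mul_of_nonneg_left _ (by positivity)
          apply mul_le_mul_of_nonneg_right hch (by positivity)
      _ = (N.choose n : ℝ) * (((m:ℝ)/N * (y-1)) ^ j * (1:ℝ) ^ (n - j) * (n.choose j : ℝ)) := by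
          rw [mul_pow, one_pow]
          linear_combination (-((y-1)^j * ((m:ℝ)/N)^j)) * hcm
  calc ∑ j ∈ Finset.range (n+1), (y - 1) ^ j * ((m.choose j : ℝ) * ((N - j).choose (n - j) : ℝ))
      ≤ ∑ j ∈ Finset.range (n+1),
          (N.choose n : ℝ) * (((m:ℝ)/N * (y-1)) ^ j * (1:ℝ) ^ (n - j) * (n.choose j : ℝ)) :=
        Finset.sum_le_sum key
    _ = (N.choose n : ℝ) * ((m:ℝ)/N * (y-1) + 1) ^ n := by
        rw [← Finset.mul_sum, add_pow]

/-- `(1-s) e^s ≤ (1+s) e^{-s}` for `s ≥ 0` (equivalent to `tanh s ≤ s`). -/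
lemma tanh_aux {s : ℝ} (hs : 0 ≤ s) : (1 - s) * Real.exp s ≤ (1 + s) * Real.exp (-s) := by
  have key : MonotoneOn (fun s : ℝ => (1 + s) * Real.exp (-s) - (1 - s) * Real.exp s)
      (Set.Ici (0:ℝ)) := by
    apply monotoneOn_of_deriv_nonneg (convex_Ici 0)
    · fun_prop
    · apply Differentiable.differentiableOn; fun_prop
    · intro x hx
      rw [interior_Ici] at hx
      have hd : HasDerivAt (fun s : ℝ => (1 + s) * Real.exp (-s) - (1 - s) * Real.exp s)
          (x * Real.exp x - x * Real.exp (-x)) x := by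
        have h1 : HasDerivAt (fun s : ℝ => (1 + s) * Real.exp (-s))
            (1 * Real.exp (-x) + (1 + x) * (Real.exp (-x) * (-1))) x :=
          HasDerivAt.mul ((hasDerivAt_id x).const_add 1)
            ((Real.hasDerivAt_exp (-x)).comp x ((hasDerivAt_id x).neg))
        have h2 : HasDerivAt (fun s : ℝ => (1 - s) * Real.exp s)
            ((-1) * Real.exp x + (1 - x) * Real.exp x) x :=
          HasDerivAt.mul ((hasDerivAt_id x).neg.const_add 1) (Real.hasDerivAt_exp x)
        have := h1.sub h2
        refine this.congr_deriv ?_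
        ring
      rw [hd.deriv]
      have : Real.exp (-x) ≤ Real.exp x := Real.exp_le_exp.mpr (by linarith [Set.mem_Ioi.mp hx])
      have hx0 : 0 ≤ x := le_of_lt hx
      nlinarith
  have h0 : (fun s : ℝ => (1 + s) * Real.exp (-s) - (1 - s) * Real.exp s) 0 = 0 := by simp
  have h2 := key (Set.self_mem_Ici) (Set.mem_Ici.mpr hs) hs
  rw [h0] at h2
  have h3 : (0:ℝ) ≤ (1 + s) * Real.exp (-s) - (1 - s) * Real.exp s := h2
  linarith

/-- Key pointwise inequality: `μ(1-μ)(e^t - 1) ≤ (t/4)(1 + μ(e^t - 1))`. -/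
lemma key_ineq {μ t : ℝ} (hμ0 : 0 ≤ μ) (hμ1 : μ ≤ 1) (ht : 0 ≤ t) :
    μ * (1 - μ) * (Real.exp t - 1) ≤ t / 4 * (1 + μ * (Real.exp t - 1)) := by
  set u := Real.exp (t / 2) with hu
  have hu1 : 1 ≤ u := Real.one_le_exp (by linarith)
  have hut : Real.exp t = u ^ 2 := by
    rw [hu, sq, ← Real.exp_add]
    congr 1
    ring
  have htanh : u - 1 ≤ t / 4 * (u + 1) := by
    have h := tanh_aux (s := t / 4) (by linarith)
    have hmul := mul_le_mul_of_nonneg_right h (le_of_lt (Real.exp_pos (t/4)))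
    have e1 : Real.exp (t/4) * Real.exp (t/4) = u := by
      rw [← Real.exp_add, hu]; congr 1; ring
    have e2 : Real.exp (-(t/4)) * Real.exp (t/4) = 1 := by
      rw [← Real.exp_add]; norm_num
    nlinarith [Real.exp_pos (t/4)]
  rw [hut]
  nlinarith [sq_nonneg (μ * (u + 1) - 1), mul_nonneg (mul_nonneg (mul_nonneg hμ0 (by linarith : (0:ℝ) ≤ 1 - μ)) (by linarith : (0:ℝ) ≤ u + 1)) (by linarith : (0:ℝ) ≤ t / 4 * (u+1) - (u-1)), mul_nonneg (by linarith : (0:ℝ) ≤ t/4) (sq_nonneg (μ * (u + 1) - 1))]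

/-- Hoeffding's lemma for a Bernoulli: `1 + μ(e^t - 1) ≤ exp(μt + t²/8)`. -/
lemma bernoulli_mgf {μ t : ℝ} (hμ0 : 0 ≤ μ) (hμ1 : μ ≤ 1) (ht : 0 ≤ t) :
    1 + μ * (Real.exp t - 1) ≤ Real.exp (μ * t + t ^ 2 / 8) := by
  have hD : ∀ x : ℝ, 0 ≤ x → (0:ℝ) < 1 + μ * (Real.exp x - 1) := by
    intro x hx
    have : (1:ℝ) ≤ Real.exp x := Real.one_le_exp hx
    nlinarith
  have key : MonotoneOn (fun x : ℝ => μ * x + x ^ 2 / 8 - Real.log (1 + μ * (Real.exp x - 1)))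
      (Set.Ici (0:ℝ)) := by
    apply monotoneOn_of_deriv_nonneg (convex_Ici 0)
    · apply ContinuousOn.sub (by fun_prop)
      apply ContinuousOn.log (by fun_prop)
      intro x hx
      exact ne_of_gt (hD x hx)
    · apply DifferentiableOn.sub (by fun_prop)
      apply DifferentiableOn.log (by fun_prop)
      intro x hx
      rw [interior_Ici] at hx
      exact ne_of_gt (hD x (le_of_lt hx))
    · intro x hx
      rw [interior_Ici] at hx
      have hx0 : 0 ≤ x := le_of_lt hx
      have hDx : (0:ℝ) < 1 + μ * (Real.exp x - 1) := hD x hx0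
      have hd : HasDerivAt (fun x : ℝ => μ * x + x ^ 2 / 8 - Real.log (1 + μ * (Real.exp x - 1)))
          (μ + x / 4 - μ * Real.exp x / (1 + μ * (Real.exp x - 1))) x := by
        have h1 : HasDerivAt (fun x : ℝ => μ * x + x ^ 2 / 8) (μ + x / 4) x := by
          have ha : HasDerivAt (fun x : ℝ => μ * x) μ x := by
            simpa using (hasDerivAt_id x).const_mul μ
          have hb : HasDerivAt (fun x : ℝ => x ^ 2 / 8) (x / 4) x := by
            have := (hasDerivAt_pow 2 x).div_const 8
            refine this.congr_deriv ?_
            ring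
          exact ha.add hb
        have h2 : HasDerivAt (fun x : ℝ => 1 + μ * (Real.exp x - 1)) (μ * Real.exp x) x := by
          have := (((Real.hasDerivAt_exp x).sub_const 1).const_mul μ).const_add 1
          simpa using this
        have h3 : HasDerivAt (fun x : ℝ => Real.log (1 + μ * (Real.exp x - 1)))
            (μ * Real.exp x / (1 + μ * (Real.exp x - 1))) x := h2.log (ne_of_gt hDx)
        exact h1.sub h3
      rw [hd.deriv]
      rw [sub_nonneg, div_le_iff₀ hDx]
      have := key_ineq hμ0 hμ1 hx0
      nlinarith
  have h0 : (fun x : ℝ => μ * x + x ^ 2 / 8 - Real.log (1 + μ * (Real.exp x - 1))) 0 = 0 := by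
    simp
  have hm := key (Set.self_mem_Ici) (Set.mem_Ici.mpr ht) ht
  rw [h0] at hm
  have hlog : Real.log (1 + μ * (Real.exp t - 1)) ≤ μ * t + t ^ 2 / 8 := by linarith
  calc 1 + μ * (Real.exp t - 1) = Real.exp (Real.log (1 + μ * (Real.exp t - 1))) :=
        (Real.exp_log (hD t ht)).symm
    _ ≤ Real.exp (μ * t + t ^ 2 / 8) := Real.exp_le_exp.mpr hlog

set_option maxHeartbeats 1000000 in
theorem stmt11 (n n' : ℕ) (hn : 0 < n) (hn' : 0 < n') (c : Fin (n + n') → Bool)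
    (p ε : ℝ) (hp : 0 < p) (hε : 0 < ε) :
    ((Nat.card {A : Finset (Fin (n + n')) // A.card = n ∧
        (p + ε ≤ ((A.filter fun i => c i = true).card : ℝ) / n) ∧
        (((Aᶜ.filter fun i => c i = true).card : ℝ) / n' ≤ p)} : ℝ) /
      (Nat.card {A : Finset (Fin (n + n')) // A.card = n} : ℝ)) ≤
    Real.exp (-2 * ((n' : ℝ) / ((n : ℝ) + n')) ^ 2 * n * ε ^ 2) := by
  classical
  set C : Finset (Fin (n + n')) := univ.filter (fun i => c i = true) with hCdef
  set m := C.card with hmdef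
  have hcard : Fintype.card (Fin (n + n')) = n + n' := Fintype.card_fin _
  have hmN : m ≤ n + n' := by
    calc m ≤ (univ : Finset (Fin (n+n'))).card := Finset.card_le_univ C
      _ = n + n' := by rw [Finset.card_univ, hcard]
  have hNR : (0:ℝ) < (n:ℝ) + n' := by positivity
  have hNcast : ((n + n' : ℕ) : ℝ) = (n:ℝ) + n' := by push_cast; ring
  set μ : ℝ := (m : ℝ) / ((n:ℝ) + n') with hμdef
  set ε' : ℝ := (n' : ℝ) * ε / ((n:ℝ) + n') with hε'def
  have hε'pos : 0 < ε' := by positivity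
  set t : ℝ := 4 * ε' with htdef
  have ht0 : 0 ≤ t := by positivity
  have hμ0 : 0 ≤ μ := by positivity
  have hμ1 : μ ≤ 1 := by
    rw [hμdef, div_le_one hNR, ← hNcast]
    exact_mod_cast hmN
  set y : ℝ := Real.exp t with hydef
  have hy1 : 1 ≤ y := Real.one_le_exp ht0
  set s : ℝ := (n:ℝ) * μ + (n:ℝ) * ε' with hsdef
  -- the filter over which we count
  set P : Finset (Fin (n + n')) → Prop := fun A => A.card = n ∧
      (p + ε ≤ ((A.filter fun i => c i = true).card : ℝ) / n) ∧
      (((Aᶜ.filter fun i => c i = true).card : ℝ) / n' ≤ p) with hPdef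
  set Q : Finset (Fin (n + n')) → Prop := fun A => s ≤ ((A ∩ C).card : ℝ) with hQdef
  have hy0 : (0:ℝ) < y := lt_of_lt_of_le one_pos hy1
  clear_value C m μ ε' t y s
  -- numerator and denominator as finset cards
  have hnum : (Nat.card {A : Finset (Fin (n + n')) // P A} : ℝ)
      = (((univ : Finset (Finset (Fin (n+n')))).filter P).card : ℝ) := by
    rw [Nat.card_eq_fintype_card, Fintype.card_subtype]
  have hden : (Nat.card {A : Finset (Fin (n + n')) // A.card = n} : ℝ)
      = ((n + n').choose n : ℝ) := by
    rw [Nat.card_eq_fintype_card, Fintype.card_subtype]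
    congr 1
    have : (univ : Finset (Finset (Fin (n+n')))).filter (fun A => A.card = n)
        = Finset.powersetCard n (univ : Finset (Fin (n+n'))) := by
      ext A
      simp [Finset.mem_powersetCard, Finset.subset_univ]
    rw [this, Finset.card_powersetCard, Finset.card_univ, hcard]
  have hchoosepos : (0:ℝ) < ((n + n').choose n : ℝ) := by
    exact_mod_cast Nat.choose_pos (Nat.le_add_right n n')
  -- event inclusion
  have hsub : (univ : Finset (Finset (Fin (n+n')))).filter P
      ⊆ (Finset.powersetCard n (univ : Finset (Fin (n+n')))).filter Q := by
    intro A hA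
    rw [mem_filter] at hA
    obtain ⟨-, hcardA, h1, h2⟩ := hA
    have hAC : A.filter (fun i => c i = true) = A ∩ C := by
      ext i; simp [hCdef, Finset.mem_filter, Finset.mem_inter]
    have hAC' : Aᶜ.filter (fun i => c i = true) = Aᶜ ∩ C := by
      ext i; simp [hCdef, Finset.mem_filter, Finset.mem_inter]
    rw [hAC] at h1
    rw [hAC'] at h2
    have hsplit : (A ∩ C).card + (Aᶜ ∩ C).card = m := by
      rw [hmdef, ← Finset.card_union_of_disjoint]
      · congr 1
        ext i
        simp only [Finset.mem_union, Finset.mem_inter, Finset.mem_compl]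
        tauto
      · exact Finset.disjoint_left.mpr (by
          intro x hx hx'
          simp only [Finset.mem_inter, Finset.mem_compl] at hx hx'
          exact hx'.1 hx.1)
    rw [mem_filter, Finset.mem_powersetCard]
    refine ⟨⟨Finset.subset_univ _, hcardA⟩, ?_⟩
    rw [hQdef]
    -- real arithmetic
    have hnR : (0:ℝ) < n := by exact_mod_cast hn
    have hn'R : (0:ℝ) < n' := by exact_mod_cast hn'
    have h1' : (p + ε) * n ≤ ((A ∩ C).card : ℝ) := by
      rw [le_div_iff₀ hnR] at h1; linarith
    have h2' : ((Aᶜ ∩ C).card : ℝ) ≤ p * n' := by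
      rw [div_le_iff₀ hn'R] at h2; linarith
    have hsplitR : ((A ∩ C).card : ℝ) + ((Aᶜ ∩ C).card : ℝ) = (m : ℝ) := by
      exact_mod_cast hsplit
    apply le_of_mul_le_mul_right _ hNR
    have hexp : s * ((n:ℝ) + n') = (n:ℝ) * m + (n:ℝ) * n' * ε := by
      rw [hsdef, hμdef, hε'def]; field_simp
    rw [hexp]
    nlinarith [mul_le_mul_of_nonneg_left h1' (le_of_lt hn'R),
      mul_le_mul_of_nonneg_left h2' (le_of_lt hnR)]
  -- Chernoff counting bound
  have hcount : ((((Finset.powersetCard n (univ : Finset (Fin (n+n')))).filter Q).card : ℝ))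
      ≤ Real.exp (-(t * s)) * ∑ A ∈ Finset.powersetCard n (univ : Finset (Fin (n+n'))),
          y ^ (A ∩ C).card := by
    rw [Finset.mul_sum, Finset.card_filter]
    push_cast
    apply Finset.sum_le_sum
    intro A hA
    by_cases hQA : s ≤ ((A ∩ C).card : ℝ)
    · rw [if_pos hQA]
      have : Real.exp (-(t*s)) * y ^ (A ∩ C).card
          = Real.exp (t * (((A ∩ C).card : ℝ) - s)) := by
        rw [hydef, ← Real.exp_nat_mul, ← Real.exp_add]
        congr 1
        ring
      rw [this]
      apply Real.one_le_exp
      have : (0:ℝ) ≤ ((A ∩ C).card : ℝ) - s := by linarith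
      exact mul_nonneg ht0 this
    · rw [if_neg hQA]
      positivity
  -- MGF bound
  have hmgf : ∑ A ∈ Finset.powersetCard n (univ : Finset (Fin (n+n'))), y ^ (A ∩ C).card
      ≤ ((n + n').choose n : ℝ) * (μ * (y - 1) + 1) ^ n := by
    have := mgf_bound C n (by rw [hcard]; exact Nat.le_add_right n n') (by rw [hcard]; positivity) y hy1
    rw [hcard] at this
    rw [hμdef, ← hNcast, hmdef]
    exact this
  -- Bernoulli MGF bound
  have hbern : (μ * (y - 1) + 1) ^ n ≤ Real.exp ((n:ℝ) * (μ * t + t ^ 2 / 8)) := by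
    rw [Real.exp_nat_mul, hydef]
    apply pow_le_pow_left₀
    · nlinarith [mul_nonneg hμ0 (by linarith : (0:ℝ) ≤ y - 1)]
    · have := bernoulli_mgf hμ0 hμ1 ht0
      linarith
  -- final assembly
  rw [hnum, hden, div_le_iff₀ hchoosepos]
  have hfinal : -(t * s) + (n:ℝ) * (μ * t + t ^ 2 / 8)
      = -2 * ((n' : ℝ) / ((n : ℝ) + n')) ^ 2 * n * ε ^ 2 := by
    rw [hsdef, htdef, hμdef, hε'def]
    field_simp
    ring
  calc (((univ : Finset (Finset (Fin (n+n')))).filter P).card : ℝ)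
      ≤ (((Finset.powersetCard n (univ : Finset (Fin (n+n')))).filter Q).card : ℝ) := by
        exact_mod_cast Finset.card_le_card hsub
    _ ≤ Real.exp (-(t * s)) * ∑ A ∈ Finset.powersetCard n (univ : Finset (Fin (n+n'))),
          y ^ (A ∩ C).card := hcount
    _ ≤ Real.exp (-(t * s)) * (((n + n').choose n : ℝ) * (μ * (y - 1) + 1) ^ n) := by
        apply mul_le_mul_of_nonneg_left hmgf (le_of_lt (Real.exp_pos _))
    _ ≤ Real.exp (-(t * s)) * (((n + n').choose n : ℝ) * Real.exp ((n:ℝ) * (μ * t + t ^ 2 / 8))) := by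
        apply mul_le_mul_of_nonneg_left _ (le_of_lt (Real.exp_pos _))
        apply mul_le_mul_of_nonneg_left hbern (le_of_lt hchoosepos)
    _ = Real.exp (-2 * ((n' : ℝ) / ((n : ℝ) + n')) ^ 2 * n * ε ^ 2) * ((n + n').choose n : ℝ) := by
        rw [← hfinal, Real.exp_add]
        ring
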